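/- Let β > 0 and g(t) = exp(−t^{−β}) for t > 0, g(t) = 0 for t ≤ 0. For fixed m ≥ 3, define u : ℝ × ℤ → ℝ by u(t,0) = g(t); for x ≥ 1, u(t,x) = g(t) + Σ_{k=1}^∞ [g^{(mk)}(t)/(2k)!]·(x+k)···(x+1)·x···(x−k+1); and u(t,x) = u(t,−x−1) for x ≤ −1. Then u is a nontrivial solution of the higher-order equation ∂_t^m u(t,x) = u(t,x+1) + u(t,x−1) − 2u(t,x) on ℝ × ℤ with ∂_t^k u(0,x) = 0 for all k ∈ ℕ₀ and x ∈ ℤ. -/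

import Mathlib

open Real Filter Topology

noncomputable def gfun (β : ℝ) (t : ℝ) : ℝ :=
  if 0 < t then Real.exp (-(t ^ (-β))) else 0

noncomputable def consecProd (x : ℤ) (k : ℕ) : ℝ :=
  ∏ j ∈ Finset.range (2 * k), ((x + k - j : ℤ) : ℝ)

/-- The higher-order Tychonoff-type function: `u(t,0) = g(t)`,
`u(t,x) = g(t) + Σ_{k≥1} g^{(mk)}(t)/(2k)! · (x+k)···(x−k+1)` for `x ≥ 1`,
and `u(t,x) = u(t,−x−1)` for `x ≤ −1`. -/
noncomputable def ulinem (β : ℝ) (m : ℕ) (t : ℝ) (x : ℤ) : ℝ :=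
  gfun β t + ∑' k : ℕ,
    iteratedDeriv (m * (k + 1)) (gfun β) t / (Nat.factorial (2 * (k + 1))) *
      consecProd (if 0 ≤ x then x else -x - 1) (k + 1)

open Real Filter Topology

noncomputable def flat (β a : ℝ) (t : ℝ) : ℝ :=
  if 0 < t then t ^ a * Real.exp (-(t ^ (-β))) else 0

theorem flat_nonpos {β a : ℝ} {t : ℝ} (ht : t ≤ 0) : flat β a t = 0 := if_neg (not_lt.2 ht)

theorem tendsto_flat_aux {β : ℝ} (hβ : 0 < β) (a : ℝ) :
    Tendsto (fun t : ℝ => t ^ a * Real.exp (-(t ^ (-β)))) (𝓝[>] (0:ℝ)) (𝓝 0) := by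
  have h1 : Tendsto (fun t : ℝ => t ^ (-β)) (𝓝[>] (0:ℝ)) atTop := by
    have h := (tendsto_rpow_atTop hβ).comp tendsto_inv_nhdsGT_zero
    apply h.congr'
    filter_upwards [self_mem_nhdsWithin] with t (ht : 0 < t)
    simp only [Function.comp_apply]
    rw [Real.inv_rpow ht.le, ← Real.rpow_neg ht.le]
  have h2 : Tendsto (fun s : ℝ => s ^ (-(a/β)) * Real.exp (-1 * s)) atTop (𝓝 0) :=
    tendsto_rpow_mul_exp_neg_mul_atTop_nhds_zero _ 1 one_pos
  have h3 := h2.comp h1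
  apply h3.congr'
  filter_upwards [self_mem_nhdsWithin] with t (ht : 0 < t)
  simp only [Function.comp_apply]
  rw [← Real.rpow_mul ht.le]
  have : -β * -(a/β) = a := by field_simp
  rw [this]
  ring_nf

theorem hasDerivAt_flat {β : ℝ} (hβ : 0 < β) (a t : ℝ) :
    HasDerivAt (flat β a) (a * flat β (a-1) t + β * flat β (a-β-1) t) t := by
  rcases lt_trichotomy t 0 with ht | rfl | ht
  · have hev : flat β a =ᶠ[𝓝 t] (fun _ => 0) := by
      filter_upwards [Iio_mem_nhds ht] with s (hs : s < 0)
      exact flat_nonpos hs.le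
    rw [flat_nonpos ht.le, flat_nonpos ht.le, mul_zero, mul_zero, add_zero]
    exact (hasDerivAt_const t (0:ℝ)).congr_of_eventuallyEq hev
  · rw [flat_nonpos le_rfl, flat_nonpos le_rfl, mul_zero, mul_zero, add_zero]
    rw [hasDerivAt_iff_tendsto_slope, ← nhdsLT_sup_nhdsGT, tendsto_sup]
    constructor
    · apply Tendsto.congr' (f₁ := fun _ => (0:ℝ))
      · filter_upwards [self_mem_nhdsWithin] with s (hs : s < 0)
        rw [slope_def_field, flat_nonpos hs.le, flat_nonpos le_rfl]
        simp
      · exact tendsto_const_nhds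
    · apply Tendsto.congr' (f₁ := fun s : ℝ => s ^ (a-1) * Real.exp (-(s ^ (-β))))
      · filter_upwards [self_mem_nhdsWithin] with s (hs : 0 < s)
        rw [slope_def_field, flat_nonpos le_rfl, flat]
        rw [if_pos hs, Real.rpow_sub_one hs.ne']
        field_simp
        rw [sub_zero, sub_zero, mul_div_cancel_left₀ _ hs.ne']
      · exact tendsto_flat_aux hβ (a-1)
  · have hx : HasDerivAt (fun s : ℝ => s ^ a) (a * t ^ (a-1)) t :=
      Real.hasDerivAt_rpow_const (Or.inl ht.ne')
    have hin : HasDerivAt (fun s : ℝ => s ^ (-β)) (-β * t ^ (-β-1)) t :=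
      Real.hasDerivAt_rpow_const (Or.inl ht.ne')
    have he : HasDerivAt (fun s : ℝ => Real.exp (-(s ^ (-β))))
        (Real.exp (-(t ^ (-β))) * -(-β * t ^ (-β-1))) t := hin.neg.exp
    have hprod := hx.mul he
    have hev : (fun s : ℝ => s ^ a * Real.exp (-(s ^ (-β)))) =ᶠ[𝓝 t] flat β a := by
      filter_upwards [Ioi_mem_nhds ht] with s (hs : 0 < s)
      rw [flat, if_pos hs]
    have := hprod.congr_of_eventuallyEq hev.symm
    refine this.congr_deriv (Eq.symm ?_)
    rw [flat, flat, if_pos ht, if_pos ht]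
    have e1 : t ^ (a - 1) = t ^ a / t := Real.rpow_sub_one ht.ne' a
    have e2 : t ^ (a - β - 1) = t ^ a * t ^ (-β - 1) := by
      rw [← Real.rpow_add ht]; ring_nf
    rw [e1, e2]
    ring

inductive FlatComb (β : ℝ) : (ℝ → ℝ) → Prop
  | zero : FlatComb β (fun _ => 0)
  | step (c a : ℝ) {f : ℝ → ℝ} (hf : FlatComb β f) :
      FlatComb β (fun t => c * flat β a t + f t)

theorem FlatComb.eq_zero {β : ℝ} {f : ℝ → ℝ} (hf : FlatComb β f) {t : ℝ} (ht : t ≤ 0) :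
    f t = 0 := by
  induction hf with
  | zero => rfl
  | step c a hf ih => simp [flat_nonpos ht, ih]

theorem FlatComb.deriv {β : ℝ} (hβ : 0 < β) {f : ℝ → ℝ} (hf : FlatComb β f) :
    ∃ f' : ℝ → ℝ, FlatComb β f' ∧ ∀ t, HasDerivAt f (f' t) t := by
  induction hf with
  | zero => exact ⟨fun _ => 0, FlatComb.zero, fun t => hasDerivAt_const t 0⟩
  | step c a hf ih =>
    obtain ⟨f', hf', hd⟩ := ih
    refine ⟨fun t => (c * a) * flat β (a-1) t + ((c * β) * flat β (a-β-1) t + f' t),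
      FlatComb.step _ _ (FlatComb.step _ _ hf'), fun t => ?_⟩
    have h1 := ((hasDerivAt_flat hβ a t).const_mul c).add (hd t)
    refine h1.congr_deriv (Eq.symm ?_)
    ring

theorem flatComb_gfun {β : ℝ} : FlatComb β (gfun β) := by
  have : gfun β = (fun t => 1 * flat β 0 t + (fun _ : ℝ => (0:ℝ)) t) := by
    funext t
    by_cases ht : 0 < t
    · simp [gfun, flat, if_pos ht, Real.rpow_zero]
    · simp [gfun, flat, if_neg ht]
  rw [this]
  exact FlatComb.step _ _ FlatComb.zero

theorem flatComb_iteratedDeriv {β : ℝ} (hβ : 0 < β) (n : ℕ) :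
    FlatComb β (iteratedDeriv n (gfun β)) := by
  induction n with
  | zero => simpa [iteratedDeriv_zero] using flatComb_gfun
  | succ n ih =>
    obtain ⟨f', hf', hd⟩ := ih.deriv hβ
    rw [iteratedDeriv_succ]
    have : deriv (iteratedDeriv n (gfun β)) = f' := funext fun t => (hd t).deriv
    rw [this]; exact hf'

theorem gfun_contDiff {β : ℝ} (hβ : 0 < β) : ContDiff ℝ (⊤ : ℕ∞) (gfun β) := by
  apply contDiff_of_differentiable_iteratedDeriv
  intro k _
  obtain ⟨f', _, hd⟩ := (flatComb_iteratedDeriv hβ k).deriv hβ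
  exact fun t => (hd t).differentiableAt

theorem iteratedDeriv_gfun_nonpos {β : ℝ} (hβ : 0 < β) (n : ℕ) {t : ℝ} (ht : t ≤ 0) :
    iteratedDeriv n (gfun β) t = 0 :=
  (flatComb_iteratedDeriv hβ n).eq_zero ht

def intProd (x : ℤ) (k : ℕ) : ℤ := ∏ j ∈ Finset.range (2 * k), (x + k - j)

theorem consecProd_eq_cast (x : ℤ) (k : ℕ) : consecProd x k = ((intProd x k : ℤ) : ℝ) := by
  rw [consecProd, intProd, Int.cast_prod]

theorem intProd_eq_zero {x : ℤ} {k : ℕ} (h1 : -(k:ℤ) ≤ x) (h2 : x < k) : intProd x k = 0 := by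
  apply Finset.prod_eq_zero (i := (x + k).toNat)
  · rw [Finset.mem_range]
    omega
  · omega

theorem consecProd_eq_zero {x : ℤ} {k : ℕ} (h1 : -(k:ℤ) ≤ x) (h2 : x < k) :
    consecProd x k = 0 := by
  rw [consecProd_eq_cast, intProd_eq_zero h1 h2, Int.cast_zero]

theorem intProd_identity (y : ℤ) (k : ℕ) :
    intProd (y+1) (k+1) + intProd (y-1) (k+1) - 2 * intProd y (k+1)
      = (2*(k:ℤ)+2) * (2*k+1) * intProd y k := by
  have h2 : 2 * (k+1) = (2*k+1)+1 := by ring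
  set P : ℤ := intProd y k with hP
  have e1 : intProd (y+1) (k+1) = P * (y+k+1) * (y+k+2) := by
    rw [intProd, h2, Finset.prod_range_succ', Finset.prod_range_succ']
    rw [hP, intProd]
    rw [Finset.prod_congr rfl (g := fun j : ℕ => y + (k:ℤ) - (j:ℤ)) (fun j _ => by push_cast; ring)]
    push_cast; ring
  have e2 : intProd (y-1) (k+1) = P * (y-k) * (y-k-1) := by
    rw [intProd, h2, Finset.prod_range_succ, Finset.prod_range_succ]
    rw [hP, intProd]
    rw [Finset.prod_congr rfl (g := fun j : ℕ => y + (k:ℤ) - (j:ℤ)) (fun j _ => by push_cast; ring)]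
    push_cast; ring
  have e3 : intProd y (k+1) = P * (y+k+1) * (y-k) := by
    rw [intProd, h2, Finset.prod_range_succ, Finset.prod_range_succ']
    rw [hP, intProd]
    rw [Finset.prod_congr rfl (g := fun j : ℕ => y + (k:ℤ) - (j:ℤ)) (fun j _ => by push_cast; ring)]
    push_cast; ring
  rw [e1, e2, e3]; ring

theorem iteratedDeriv_comp_iteratedDeriv (a b : ℕ) (f : ℝ → ℝ) :
    iteratedDeriv a (iteratedDeriv b f) = iteratedDeriv (a + b) f := by
  induction a with
  | zero => simp [iteratedDeriv_zero]
  | succ a ih =>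
    rw [show a + 1 + b = (a + b) + 1 from by omega, iteratedDeriv_succ, iteratedDeriv_succ, ih]

theorem iteratedDeriv_add_apply' {n : ℕ} {f g : ℝ → ℝ}
    (hf : ContDiff ℝ (⊤ : ℕ∞) f) (hg : ContDiff ℝ (⊤ : ℕ∞) g) (t : ℝ) :
    iteratedDeriv n (fun s => f s + g s) t = iteratedDeriv n f t + iteratedDeriv n g t := by
  rw [← iteratedDerivWithin_univ, ← iteratedDerivWithin_univ, ← iteratedDerivWithin_univ]
  exact iteratedDerivWithin_add (Set.mem_univ t) uniqueDiffOn_univ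
    (hf.contDiffWithinAt.of_le (by exact_mod_cast le_top)) (hg.contDiffWithinAt.of_le (by exact_mod_cast le_top))

theorem iteratedDeriv_mul_const_apply {n : ℕ} {f : ℝ → ℝ}
    (hf : ContDiff ℝ (⊤ : ℕ∞) f) (c : ℝ) (t : ℝ) :
    iteratedDeriv n (fun s => f s * c) t = iteratedDeriv n f t * c := by
  have : (fun s => f s * c) = (fun s => c * f s) := by funext s; ring
  rw [this, ← iteratedDerivWithin_univ, ← iteratedDerivWithin_univ]
  rw [iteratedDerivWithin_const_mul (Set.mem_univ t) uniqueDiffOn_univ c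
    (hf.contDiffWithinAt.of_le (by exact_mod_cast le_top))]
  ring

theorem contDiff_iteratedDeriv_gfun {β : ℝ} (hβ : 0 < β) (j : ℕ) :
    ContDiff ℝ (⊤ : ℕ∞) (iteratedDeriv j (gfun β)) := by
  rw [iteratedDeriv_eq_iterate]
  exact (gfun_contDiff hβ).iterate_deriv j

theorem iter_comb {β : ℝ} (hβ : 0 < β) (n N : ℕ) (d : ℕ → ℕ) (C : ℕ → ℝ) (t : ℝ) :
    iteratedDeriv n (fun s => gfun β s +
        ∑ k ∈ Finset.range N, iteratedDeriv (d k) (gfun β) s * C k) t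
      = iteratedDeriv n (gfun β) t +
        ∑ k ∈ Finset.range N, iteratedDeriv (n + d k) (gfun β) t * C k := by
  induction N with
  | zero => simp
  | succ N ih =>
    have hsum : ContDiff ℝ (⊤ : ℕ∞) (fun s => gfun β s +
        ∑ k ∈ Finset.range N, iteratedDeriv (d k) (gfun β) s * C k) := by
      apply (gfun_contDiff hβ).add
      apply ContDiff.sum
      intro k _
      exact (contDiff_iteratedDeriv_gfun hβ (d k)).mul contDiff_const
    have hterm : ContDiff ℝ (⊤ : ℕ∞) (fun s => iteratedDeriv (d N) (gfun β) s * C N) :=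
      (contDiff_iteratedDeriv_gfun hβ (d N)).mul contDiff_const
    have hfun : (fun s => gfun β s +
        ∑ k ∈ Finset.range (N+1), iteratedDeriv (d k) (gfun β) s * C k)
        = (fun s => (gfun β s + ∑ k ∈ Finset.range N, iteratedDeriv (d k) (gfun β) s * C k)
            + iteratedDeriv (d N) (gfun β) s * C N) := by
      funext s; rw [Finset.sum_range_succ]; ring
    rw [hfun, iteratedDeriv_add_apply' hsum hterm, ih,
      iteratedDeriv_mul_const_apply (contDiff_iteratedDeriv_gfun hβ (d N)) (C N),
      iteratedDeriv_comp_iteratedDeriv, Finset.sum_range_succ]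
    ring

noncomputable def Tsum (β : ℝ) (m : ℕ) (z : ℤ) (t : ℝ) : ℝ :=
  ∑' k : ℕ, iteratedDeriv (m * (k + 1)) (gfun β) t / (Nat.factorial (2 * (k + 1))) *
      consecProd z (k + 1)

theorem ulinem_eq (β : ℝ) (m : ℕ) (t : ℝ) (x : ℤ) :
    ulinem β m t x = gfun β t + Tsum β m (if 0 ≤ x then x else -x - 1) t := rfl

theorem Tsum_collapse {β : ℝ} (m : ℕ) (t : ℝ) {y : ℤ} (hy : -1 ≤ y) {N : ℕ} (hN : y < (N:ℤ)) :
    Tsum β m y t = ∑ k ∈ Finset.range N, iteratedDeriv (m * (k + 1)) (gfun β) t *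
      (consecProd y (k + 1) / (Nat.factorial (2 * (k + 1)))) := by
  rw [Tsum]
  rw [tsum_eq_sum (s := Finset.range N) ?_]
  · exact Finset.sum_congr rfl fun k _ => by ring
  · intro k hk
    rw [Finset.mem_range, not_lt] at hk
    rw [consecProd_eq_zero (by push_cast; omega) (by push_cast; omega), mul_zero]

theorem Tsum_trivial {β : ℝ} (m : ℕ) (t : ℝ) {z : ℤ} (h1 : -1 ≤ z) (h2 : z ≤ 0) :
    Tsum β m z t = 0 := by
  rw [Tsum]
  convert tsum_zero with k
  rw [consecProd_eq_zero (by push_cast; omega) (by push_cast; omega), mul_zero]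

theorem main1 {β : ℝ} (hβ : 0 < β) (m : ℕ) (t : ℝ) {y : ℤ} (hy : 0 ≤ y) :
    iteratedDeriv m (fun s => gfun β s + Tsum β m y s) t
      = (gfun β t + Tsum β m (y+1) t) + (gfun β t + Tsum β m (y-1) t)
        - 2 * (gfun β t + Tsum β m y t) := by
  set M : ℕ := y.toNat + 1 with hM
  set N : ℕ := M + 1 with hN
  have hyN : y < (N:ℤ) := by simp only [hN, hM]; push_cast; omega
  have h1N : y + 1 < (N:ℤ) := by simp only [hN, hM]; push_cast; omega
  have hfun : (fun s => gfun β s + Tsum β m y s)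
      = (fun s => gfun β s + ∑ k ∈ Finset.range N, iteratedDeriv (m*(k+1)) (gfun β) s *
          (consecProd y (k + 1) / (Nat.factorial (2 * (k + 1))))) :=
    funext fun s => by rw [Tsum_collapse m s (by omega) hyN]
  rw [hfun, iter_comb hβ m N (fun k => m*(k+1)) _ t,
    Tsum_collapse m t (by omega) h1N, Tsum_collapse m t (by omega) (by omega : y - 1 < (N:ℤ)),
    Tsum_collapse m t (by omega) hyN]
  have key : ∀ k : ℕ,
      iteratedDeriv (m*(k+1)) (gfun β) t * (consecProd (y+1) (k+1) / (Nat.factorial (2*(k+1))))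
      + iteratedDeriv (m*(k+1)) (gfun β) t * (consecProd (y-1) (k+1) / (Nat.factorial (2*(k+1))))
      - 2 * (iteratedDeriv (m*(k+1)) (gfun β) t * (consecProd y (k+1) / (Nat.factorial (2*(k+1)))))
      = iteratedDeriv (m*(k+1)) (gfun β) t * (consecProd y k / (Nat.factorial (2*k))) := by
    intro k
    have hid : consecProd (y+1) (k+1) + consecProd (y-1) (k+1) - 2 * consecProd y (k+1)
        = ((2*(k:ℝ)+2)*(2*(k:ℝ)+1)) * consecProd y k := by
      rw [consecProd_eq_cast, consecProd_eq_cast, consecProd_eq_cast, consecProd_eq_cast]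
      exact_mod_cast intProd_identity y k
    have hfa : (Nat.factorial (2*(k+1)) : ℝ)
        = ((2*(k:ℝ)+2)*(2*(k:ℝ)+1)) * (Nat.factorial (2*k) : ℝ) := by
      rw [show 2*(k+1) = (2*k+1)+1 from by ring, Nat.factorial_succ, Nat.factorial_succ]
      push_cast; ring
    have h1 : (Nat.factorial (2*(k+1)) : ℝ) ≠ 0 := Nat.cast_ne_zero.2 (Nat.factorial_ne_zero _)
    have h2 : (Nat.factorial (2*k) : ℝ) ≠ 0 := Nat.cast_ne_zero.2 (Nat.factorial_ne_zero _)
    have h3 : ((2*(k:ℝ)+2)*(2*(k:ℝ)+1)) ≠ 0 := by positivity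
    calc iteratedDeriv (m*(k+1)) (gfun β) t * (consecProd (y+1) (k+1) / (Nat.factorial (2*(k+1))))
        + iteratedDeriv (m*(k+1)) (gfun β) t * (consecProd (y-1) (k+1) / (Nat.factorial (2*(k+1))))
        - 2 * (iteratedDeriv (m*(k+1)) (gfun β) t * (consecProd y (k+1) / (Nat.factorial (2*(k+1)))))
        = iteratedDeriv (m*(k+1)) (gfun β) t *
            ((consecProd (y+1) (k+1) + consecProd (y-1) (k+1) - 2 * consecProd y (k+1))
              / (Nat.factorial (2*(k+1)))) := by ring
      _ = iteratedDeriv (m*(k+1)) (gfun β) t * (consecProd y k / (Nat.factorial (2*k))) := by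
          rw [hid, hfa]
          field_simp
  have hsum : (gfun β t + ∑ k ∈ Finset.range N, iteratedDeriv (m*(k+1)) (gfun β) t *
        (consecProd (y+1) (k + 1) / (Nat.factorial (2 * (k + 1)))))
      + (gfun β t + ∑ k ∈ Finset.range N, iteratedDeriv (m*(k+1)) (gfun β) t *
        (consecProd (y-1) (k + 1) / (Nat.factorial (2 * (k + 1)))))
      - 2 * (gfun β t + ∑ k ∈ Finset.range N, iteratedDeriv (m*(k+1)) (gfun β) t *
        (consecProd y (k + 1) / (Nat.factorial (2 * (k + 1)))))
      = ∑ k ∈ Finset.range N, iteratedDeriv (m*(k+1)) (gfun β) t *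
          (consecProd y k / (Nat.factorial (2*k))) := by
    rw [← Finset.sum_congr rfl (fun k _ => key k)]
    rw [Finset.sum_sub_distrib, Finset.sum_add_distrib, ← Finset.mul_sum]
    ring
  rw [hsum]
  rw [hN, Finset.sum_range_succ' (fun k => iteratedDeriv (m*(k+1)) (gfun β) t *
      (consecProd y k / (Nat.factorial (2*k)))) M]
  rw [Finset.sum_range_succ]
  have hlast : consecProd y (M + 1) = 0 :=
    consecProd_eq_zero (by push_cast; omega) (by push_cast [hM]; omega)
  rw [hlast]
  have hzero : consecProd y 0 = 1 := by rw [consecProd]; simp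
  rw [hzero]
  simp only [mul_zero, zero_div, mul_one, add_zero, Nat.mul_zero, Nat.factorial_zero]
  rw [Finset.sum_congr rfl (fun k _ => by rw [show m + m*(k+1) = m*(k+1+1) from by ring])]
  rw [add_comm]
  norm_num


/-- for `m ≥ 3`, the function `u` above is a nontrivial solution of the
higher-order equation `∂_t^m u(t,x) = u(t,x+1) + u(t,x−1) − 2u(t,x)` on `ℝ × ℤ` with all
time derivatives vanishing at `t = 0`. -/
theorem ulinem_solves_higher_order (β : ℝ) (hβ : 0 < β) (m : ℕ) (hm : 3 ≤ m) :
    (∀ (t : ℝ) (x : ℤ),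
      iteratedDeriv m (fun s => ulinem β m s x) t
        = ulinem β m t (x + 1) + ulinem β m t (x - 1) - 2 * ulinem β m t x) ∧
    (∀ (k : ℕ) (x : ℤ), iteratedDeriv k (fun s => ulinem β m s x) 0 = 0) ∧
    ∃ (t : ℝ) (x : ℤ), ulinem β m t x ≠ 0 := by
  refine ⟨?_, ?_, ?_⟩
  · intro t x
    have hy : (0:ℤ) ≤ (if 0 ≤ x then x else -x - 1) := by split_ifs <;> omega
    show iteratedDeriv m (fun s => gfun β s + Tsum β m (if 0 ≤ x then x else -x - 1) s) t
      = (gfun β t + Tsum β m (if 0 ≤ x + 1 then x + 1 else -(x + 1) - 1) t)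
        + (gfun β t + Tsum β m (if 0 ≤ x - 1 then x - 1 else -(x - 1) - 1) t)
        - 2 * (gfun β t + Tsum β m (if 0 ≤ x then x else -x - 1) t)
    rw [main1 hβ m t hy]
    have hkey : Tsum β m ((if 0 ≤ x then x else -x - 1) + 1) t
        + Tsum β m ((if 0 ≤ x then x else -x - 1) - 1) t
        = Tsum β m (if 0 ≤ x + 1 then x + 1 else -(x + 1) - 1) t
        + Tsum β m (if 0 ≤ x - 1 then x - 1 else -(x - 1) - 1) t := by
      rcases lt_trichotomy x 0 with hx | rfl | hx
      · by_cases hx1 : x = -1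
        · subst hx1
          rw [if_neg (by omega), if_pos (by omega), if_neg (by omega)]
          norm_num
          rw [Tsum_trivial m t (by omega) (by omega) (z := -1),
            Tsum_trivial m t (by omega) (by omega) (z := 0)]
          ring
        · rw [if_neg (by omega), if_neg (by omega), if_neg (by omega)]
          rw [show -x - 1 + 1 = -(x - 1) - 1 from by ring,
            show -x - 1 - 1 = -(x + 1) - 1 from by ring]
          ring
      · rw [if_pos le_rfl, if_pos (by omega), if_neg (by omega)]
        norm_num
        rw [Tsum_trivial m t (by omega) (by omega) (z := (-1:ℤ)),
          Tsum_trivial m t (by omega) (by omega) (z := (0:ℤ))]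
      · rw [if_pos (by omega), if_pos (by omega), if_pos (by omega)]
    linarith [hkey]
  · intro k x
    obtain ⟨y, hy, hy0⟩ : ∃ y : ℤ, (if 0 ≤ x then x else -x - 1) = y ∧ 0 ≤ y :=
      ⟨_, rfl, by split_ifs <;> omega⟩
    have hfun : (fun s => ulinem β m s x)
        = (fun s => gfun β s + ∑ j ∈ Finset.range (y.toNat + 1),
            iteratedDeriv (m * (j + 1)) (gfun β) s *
              (consecProd y (j + 1) / (Nat.factorial (2 * (j + 1))))) := by
      funext s
      rw [ulinem_eq, hy, Tsum_collapse m s (by omega) (N := y.toNat + 1) (by omega)]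
    rw [hfun, iter_comb hβ k (y.toNat + 1) (fun j => m * (j + 1)) _ 0,
      iteratedDeriv_gfun_nonpos hβ k le_rfl,
      Finset.sum_eq_zero fun j _ => by rw [iteratedDeriv_gfun_nonpos hβ _ le_rfl, zero_mul]]
    ring
  · refine ⟨1, 0, ?_⟩
    have h0 : (if (0:ℤ) ≤ 0 then (0:ℤ) else -0 - 1) = 0 := if_pos le_rfl
    rw [ulinem_eq, h0, Tsum_trivial m 1 (by norm_num) le_rfl, add_zero, gfun,
      if_pos (by norm_num : (0:ℝ) < 1), Real.one_rpow]
    exact (Real.exp_pos _).ne'
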